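/- Let V be a reflexive Banach space and A:V→V* an operator satisfying the growth condition ‖A(v)‖_{V*} ≤ C(1+‖v‖_V^{α-1})(1+‖v‖_H^β) for some α>1, β≥0, where V ⊆ H continuously. Then the two definitions of pseudo-monotonicity are equivalent: A satisfies Brézis's definition (vₙ⇀v and liminf⟨A(vₙ),vₙ-v⟩ ≥ 0 implies ⟨A(v),v-u⟩ ≥ limsup⟨A(vₙ),vₙ-u⟩ for all u) if and only if A satisfies Browder's definition (vₙ⇀v and liminf⟨A(vₙ),vₙ-v⟩ ≥ 0 implies A(vₙ)⇀A(v) and ⟨A(vₙ),vₙ⟩→⟨A(v),v⟩). -/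

import Mathlib

open Filter NormedSpace

/-- Under the growth condition `‖A v‖_{V*} ≤ C (1 + ‖v‖_V^{α-1})(1 + ‖v‖_H^β)`
(the `H`-norm realized through a continuous embedding `e : V →L H` into a Hilbert
space), Brézis's and Browder's definitions of pseudo-monotonicity are equivalent.
Weak convergence in `V` is tested against all `f ∈ V*`, and weak convergence in
`V*` against elements of `V`. -/
theorem pseudomonotone_definitions_equivalent
    {V H : Type*} [NormedAddCommGroup V] [NormedSpace ℝ V]
    [NormedAddCommGroup H] [InnerProductSpace ℝ H]
    (e : V →L[ℝ] H)
    (A : V → StrongDual ℝ V)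
    (α β C : ℝ) (hα : 1 < α) (hβ : 0 ≤ β) (hC : 0 < C)
    (hgrowth : ∀ v : V, ‖A v‖ ≤ C * (1 + ‖v‖ ^ (α - 1)) * (1 + ‖e v‖ ^ β)) :
    ((∀ (v : ℕ → V) (x : V),
        (∀ f : StrongDual ℝ V,
            Tendsto (fun n => f (v n)) atTop (nhds (f x))) →
        0 ≤ liminf (fun n => A (v n) (v n - x)) atTop →
        ∀ u : V, limsup (fun n => A (v n) (v n - u)) atTop ≤ A x (x - u))
      ↔
      (∀ (v : ℕ → V) (x : V),
        (∀ f : StrongDual ℝ V,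
            Tendsto (fun n => f (v n)) atTop (nhds (f x))) →
        0 ≤ liminf (fun n => A (v n) (v n - x)) atTop →
        (∀ w : V, Tendsto (fun n => A (v n) w) atTop (nhds (A x w))) ∧
          Tendsto (fun n => A (v n) (v n)) atTop (nhds (A x x)))) := by
  constructor
  · -- Brézis ⇒ Browder
    intro hB v x hweak hlim
    -- Step 1: `v` is norm-bounded (Banach–Steinhaus in the double dual).
    obtain ⟨M0, hM0⟩ : ∃ M, ∀ n, ‖v n‖ ≤ M := by
      have hpt : ∀ f : StrongDual ℝ V,
          ∃ c, ∀ n, ‖(inclusionInDoubleDual ℝ V (v n)) f‖ ≤ c := by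
        intro f
        obtain ⟨c, hc⟩ := ((hweak f).norm).bddAbove_range
        exact ⟨c, fun n => hc (Set.mem_range_self n)⟩
      obtain ⟨c', hc'⟩ := banach_steinhaus hpt
      refine ⟨c', fun n => ?_⟩
      have : ‖inclusionInDoubleDualLi ℝ (v n)‖ = ‖v n‖ :=
        (inclusionInDoubleDualLi ℝ (E := V)).norm_map (v n)
      rw [← this]
      exact hc' n
    set M : ℝ := max M0 0 with hMdef
    have hM : ∀ n, ‖v n‖ ≤ M := fun n => (hM0 n).trans (le_max_left _ _)
    have hMnn : (0 : ℝ) ≤ M := le_max_right _ _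
    -- Step 2: `A (v n)` is norm-bounded via the growth condition.
    set K : ℝ := C * (1 + M ^ (α - 1)) * (1 + (‖e‖ * M) ^ β) with hKdef
    have hK : ∀ n, ‖A (v n)‖ ≤ K := by
      intro n
      refine (hgrowth (v n)).trans ?_
      have h1 : ‖v n‖ ^ (α - 1) ≤ M ^ (α - 1) :=
        Real.rpow_le_rpow (norm_nonneg _) (hM n) (by linarith)
      have h2 : ‖e (v n)‖ ^ β ≤ (‖e‖ * M) ^ β := by
        refine Real.rpow_le_rpow (norm_nonneg _) ?_ hβ
        exact (e.le_opNorm (v n)).trans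
          (mul_le_mul_of_nonneg_left (hM n) (norm_nonneg e))
      have hp1 : (0:ℝ) ≤ 1 + ‖v n‖ ^ (α - 1) := by positivity
      have hp2 : (0:ℝ) ≤ 1 + ‖e (v n)‖ ^ β := by positivity
      have hp3 : (0:ℝ) ≤ 1 + M ^ (α - 1) := by positivity
      refine mul_le_mul (mul_le_mul le_rfl (by linarith) hp1 hC.le) (by linarith) hp2 ?_
      positivity
    have hKnn : (0 : ℝ) ≤ K := (norm_nonneg (A (v 0))).trans (hK 0)
    -- Bounding helper.
    have habs : ∀ (w : ℕ → V) (R : ℝ), (∀ n, ‖w n‖ ≤ R) →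
        ∀ n, |A (v n) (w n)| ≤ K * R := by
      intro w R hw n
      have h1 : ‖A (v n) (w n)‖ ≤ ‖A (v n)‖ * ‖w n‖ := (A (v n)).le_opNorm (w n)
      rw [Real.norm_eq_abs] at h1
      exact h1.trans (mul_le_mul (hK n) (hw n) (norm_nonneg _) hKnn)
    have hbdd : ∀ (w : ℕ → V) (R : ℝ), (∀ n, ‖w n‖ ≤ R) →
        IsBoundedUnder (· ≤ ·) atTop (fun n => A (v n) (w n)) ∧
        IsBoundedUnder (· ≥ ·) atTop (fun n => A (v n) (w n)) := by
      intro w R hw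
      exact ⟨isBoundedUnder_of ⟨K * R, fun n => (le_abs_self _).trans (habs w R hw n)⟩,
        isBoundedUnder_of ⟨-(K * R), fun n => neg_le_of_abs_le (habs w R hw n)⟩⟩
    have hsub : ∀ u : V, ∀ n, ‖v n - u‖ ≤ M + ‖u‖ :=
      fun u n => (norm_sub_le _ _).trans (add_le_add_left (hM n) _)
    have hbx := hbdd (fun n => v n - x) (M + ‖x‖) (hsub x)
    -- Step 3: `⟪A vₙ, vₙ - x⟫ → 0`.
    have hls : limsup (fun n => A (v n) (v n - x)) atTop ≤ 0 := by
      have := hB v x hweak hlim x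
      simpa using this
    have hil : liminf (fun n => A (v n) (v n - x)) atTop ≤
        limsup (fun n => A (v n) (v n - x)) atTop :=
      liminf_le_limsup hbx.1 hbx.2
    have h1 : liminf (fun n => A (v n) (v n - x)) atTop = 0 :=
      le_antisymm (hil.trans hls) hlim
    have h2 : limsup (fun n => A (v n) (v n - x)) atTop = 0 :=
      le_antisymm hls (hlim.trans hil)
    have hz : Tendsto (fun n => A (v n) (v n - x)) atTop (nhds 0) :=
      tendsto_of_liminf_eq_limsup h1 h2 hbx.1 hbx.2
    -- Step 4: `limsup ⟪A vₙ, x - u⟫ ≤ ⟪A x, x - u⟫` for every `u`.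
    have key : ∀ u : V, limsup (fun n => A (v n) (x - u)) atTop ≤ A x (x - u) := by
      intro u
      have hb1 := hbdd (fun n => v n - u) (M + ‖u‖) (hsub u)
      have hb2 : IsBoundedUnder (· ≤ ·) atTop (fun n => -(A (v n) (v n - x))) ∧
          IsBoundedUnder (· ≥ ·) atTop (fun n => -(A (v n) (v n - x))) := by
        constructor
        · exact isBoundedUnder_of ⟨K * (M + ‖x‖), fun n =>
            neg_le_of_neg_le (neg_le_of_abs_le (habs _ _ (hsub x) n))⟩
        · exact isBoundedUnder_of ⟨-(K * (M + ‖x‖)), fun n =>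
            neg_le_neg ((le_abs_self _).trans (habs _ _ (hsub x) n))⟩
      have e1 : (fun n => A (v n) (x - u)) =
          (fun n => A (v n) (v n - u)) + (fun n => -(A (v n) (v n - x))) := by
        funext n
        simp only [Pi.add_apply, map_sub]
        ring
      have hadd : limsup (fun n => A (v n) (x - u)) atTop ≤
          limsup (fun n => A (v n) (v n - u)) atTop +
            limsup (fun n => -(A (v n) (v n - x))) atTop := by
        rw [e1]
        exact limsup_add_le hb1.2 hb1.1 hb2.2.isCoboundedUnder_le hb2.1
      have hneg : Tendsto (fun n => -(A (v n) (v n - x))) atTop (nhds 0) := by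
        simpa using hz.neg
      calc limsup (fun n => A (v n) (x - u)) atTop
          ≤ limsup (fun n => A (v n) (v n - u)) atTop +
              limsup (fun n => -(A (v n) (v n - x))) atTop := hadd
        _ ≤ A x (x - u) + 0 := add_le_add (hB v x hweak hlim u) hneg.limsup_eq.le
        _ = A x (x - u) := add_zero _
    -- Step 5: weak convergence `A vₙ ⇀ A x`.
    have hw : ∀ w : V, Tendsto (fun n => A (v n) w) atTop (nhds (A x w)) := by
      intro w
      have hbw := hbdd (fun _ => w) ‖w‖ (fun _ => le_rfl)
      have hup : limsup (fun n => A (v n) w) atTop ≤ A x w := by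
        have := key (x - w)
        simpa using this
      have hdown : A x w ≤ liminf (fun n => A (v n) w) atTop := by
        have h3 := key (x + w)
        have h4 : limsup (fun n => -(A (v n) w)) atTop ≤ -(A x w) := by
          have ex : x - (x + w) = -w := by abel
          rw [ex] at h3
          simpa using h3
        have h5 : -(liminf (fun n => A (v n) w) atTop) =
            limsup (fun n => -(A (v n) w)) atTop := by
          have := Antitone.map_liminf_of_continuousAt (F := atTop)
            (f := fun r : ℝ => -r) (fun a b hab => neg_le_neg hab)
            (fun n => A (v n) w) (continuous_neg.continuousAt)
            hbw.1.isCoboundedUnder_ge hbw.2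
          simpa [Function.comp_def] using this
        have : -(liminf (fun n => A (v n) w) atTop) ≤ -(A x w) := h5.le.trans h4
        linarith
      have hil' := liminf_le_limsup hbw.1 hbw.2
      have hli : liminf (fun n => A (v n) w) atTop = A x w :=
        le_antisymm (hil'.trans hup) hdown
      have hlsw : limsup (fun n => A (v n) w) atTop = A x w :=
        le_antisymm hup (hdown.trans hil')
      exact tendsto_of_liminf_eq_limsup hli hlsw hbw.1 hbw.2
    refine ⟨hw, ?_⟩
    have := hz.add (hw x)
    simpa [map_sub, sub_add_cancel] using this
  · -- Browder ⇒ Brézis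
    intro hB v x hweak hlim u
    obtain ⟨hw, hvv⟩ := hB v x hweak hlim
    have h : Tendsto (fun n => A (v n) (v n - u)) atTop (nhds (A x (x - u))) := by
      have := hvv.sub (hw u)
      simpa [map_sub] using this
    exact h.limsup_eq.le
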